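/- If S is a finite set of integers such that the absolute difference of any two distinct elements of S lies in {3, 4, 5, 7, 8, 9}, then S has at most 3 elements. -/

import Mathlib

/-- If S is a finite set of integers such that the absolute difference
of any two distinct elements of S lies in {3, 4, 5, 7, 8, 9}, then S has at most
3 elements. -/
theorem stmt_1 (S : Finset ℤ)
    (h : ∀ a ∈ S, ∀ b ∈ S, a ≠ b → |a - b| ∈ ({3, 4, 5, 7, 8, 9} : Finset ℤ)) :
    S.card ≤ 3 := by
  by_contra hc
  push_neg at hc
  set L := S.sort (· ≤ ·) with hL
  have hlen : 4 ≤ L.length := by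
    rw [hL, Finset.length_sort]; omega
  have hsorted : L.SortedLT := S.sortedLT_sort
  have hmono : StrictMono L.get := hsorted.strictMono_get
  set x := L.get ⟨0, by omega⟩ with hx
  set y := L.get ⟨1, by omega⟩ with hy
  set z := L.get ⟨2, by omega⟩ with hz
  set w := L.get ⟨3, by omega⟩ with hw
  have hxy : x < y := hmono (by simp)
  have hyz : y < z := hmono (by simp)
  have hzw : z < w := hmono (by simp)
  have hxS : x ∈ S := (Finset.mem_sort _).mp (L.get_mem _)
  have hyS : y ∈ S := (Finset.mem_sort _).mp (L.get_mem _)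
  have hzS : z ∈ S := (Finset.mem_sort _).mp (L.get_mem _)
  have hwS : w ∈ S := (Finset.mem_sort _).mp (L.get_mem _)
  have p1 := h y hyS x hxS (by omega)
  have p2 := h z hzS y hyS (by omega)
  have p3 := h w hwS z hzS (by omega)
  have p4 := h z hzS x hxS (by omega)
  have p5 := h w hwS y hyS (by omega)
  have p6 := h w hwS x hxS (by omega)
  rw [abs_of_pos (by omega)] at p1 p2 p3 p4 p5 p6
  simp only [Finset.mem_insert, Finset.mem_singleton] at p1 p2 p3 p4 p5 p6
  omega
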